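/- Let A be a commutative ring and a_1,…,a_n ∈ A a regular sequence generating a proper ideal. Then the Koszul complex K(a_1,…,a_n) is acyclic in positive homological degrees, i.e., its homology vanishes except in degree 0 where it equals A/(a_1,…,a_n). -/

import Mathlib

open ExteriorAlgebra

section KoszulAux

open CliffordAlgebra

variable {A : Type*} [CommRing A] {M N : Type*} [AddCommGroup M] [Module A M]
  [AddCommGroup N] [Module A N]

/-- The alg hom on exterior algebras induced by a linear map. -/
noncomputable def emap (f : M →ₗ[A] N) : ExteriorAlgebra A M →ₐ[A] ExteriorAlgebra A N :=
  CliffordAlgebra.map { toLinearMap := f, map_app' := fun _ => rfl }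

@[simp] lemma emap_ι (f : M →ₗ[A] N) (m : M) : emap f (ι A m) = ι A (f m) :=
  CliffordAlgebra.map_apply_ι _ m

lemma emap_comp_eq_id (f : M →ₗ[A] N) (g : N →ₗ[A] M) (h : g.comp f = LinearMap.id) (x) :
    emap g (emap f x) = x := by
  have : (emap g).comp (emap f) = AlgHom.id A (ExteriorAlgebra A M) := by
    apply CliffordAlgebra.hom_ext
    ext m
    show emap g (emap f (ι A m)) = ι A m
    rw [emap_ι, emap_ι, show g (f m) = (g.comp f) m from rfl, h]
    rfl
  calc emap g (emap f x) = ((emap g).comp (emap f)) x := rfl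
    _ = x := by rw [this]; rfl

lemma contract_emap (f : M →ₗ[A] N) (ψ : Module.Dual A N) (x : ExteriorAlgebra A M) :
    contractLeft ψ (emap f x) = emap f (contractLeft (ψ.comp f) x) := by
  induction x using CliffordAlgebra.left_induction with
  | algebraMap r => simp [AlgHom.commutes, contractLeft_algebraMap]
  | add x y hx hy => simp [map_add, hx, hy]
  | ι_mul x m hx =>
      rw [map_mul, emap_ι, contractLeft_ι_mul, contractLeft_ι_mul, hx, map_sub, map_smul,
        map_mul, emap_ι]
      rfl

lemma emap_mem_pow (f : M →ₗ[A] N) {p : ℕ} {x : ExteriorAlgebra A M}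
    (hx : x ∈ ⋀[A]^p M) : emap f x ∈ ⋀[A]^p N := by
  induction hx using Submodule.pow_induction_on_left' with
  | algebraMap r => simpa using Submodule.algebraMap_mem (S := ⋀[A]^0 N) r
  | add x y i hx hy ihx ihy => simp only [map_add]; exact add_mem ihx ihy
  | mem_mul m hm i x hx ihx =>
      obtain ⟨v, rfl⟩ := hm
      rw [map_mul, emap_ι]
      show _ ∈ LinearMap.range (ι A : N →ₗ[A] _) ^ (i + 1)
      rw [pow_succ']
      exact Submodule.mul_mem_mul (LinearMap.mem_range_self _ _) ihx

lemma mem_pow_succ {i : ℕ} {x y : ExteriorAlgebra A N}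
    (hx : x ∈ LinearMap.range (ι A : N →ₗ[A] _)) (hy : y ∈ ⋀[A]^i N) :
    x * y ∈ ⋀[A]^(i+1) N := by
  show x * y ∈ LinearMap.range (ι A : N →ₗ[A] _) ^ (i + 1)
  rw [pow_succ']
  exact Submodule.mul_mem_mul hx hy

lemma exteriorPower_one_eq : ⋀[A]^1 N = LinearMap.range (ι A : N →ₗ[A] _) := pow_one _

/-- The Koszul differential form. -/
noncomputable def kform {n : ℕ} (a : Fin n → A) : Module.Dual A (Fin n → A) :=
  ∑ i : Fin n, a i • LinearMap.proj i

lemma kform_apply {n : ℕ} (a : Fin n → A) (v : Fin n → A) :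
    kform a v = ∑ i : Fin n, a i * v i := by
  simp [kform, LinearMap.sum_apply, LinearMap.smul_apply, LinearMap.proj_apply, smul_eq_mul]

/-- Degree-0 homology: boundaries from degree 1 are exactly the ideal. -/
lemma koszul_deg0 {n : ℕ} (a : Fin n → A) (x : A) :
    (∃ y ∈ ⋀[A]^1 (Fin n → A),
        contractLeft (kform a) y = algebraMap A (ExteriorAlgebra A (Fin n → A)) x) ↔
      x ∈ Ideal.span (Set.range a) := by
  constructor
  · rintro ⟨y, hy, hdy⟩
    rw [exteriorPower_one_eq] at hy
    obtain ⟨v, rfl⟩ := hy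
    rw [contractLeft_ι] at hdy
    have hx : kform a v = x :=
      (ExteriorAlgebra.algebraMap_leftInverse (Fin n → A)).injective hdy
    rw [← hx, kform_apply]
    refine (Submodule.mem_span_range_iff_exists_fun A).mpr ⟨v, ?_⟩
    simp [smul_eq_mul, mul_comm]
  · intro hx
    obtain ⟨c, hc⟩ := (Submodule.mem_span_range_iff_exists_fun A).mp hx
    refine ⟨ι A c, by rw [exteriorPower_one_eq]; exact LinearMap.mem_range_self _ _, ?_⟩
    rw [contractLeft_ι, kform_apply]
    congr 1
    rw [← hc]
    exact Finset.sum_congr rfl fun i _ => mul_comm _ _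

section Succ

variable {n : ℕ}

/-- Extension by zero `Aⁿ → Aⁿ⁺¹`. -/
def inclL (n : ℕ) : (Fin n → A) →ₗ[A] (Fin (n+1) → A) where
  toFun v := Fin.snoc v 0
  map_add' u v := funext fun j => by
    induction j using Fin.lastCases <;> simp [Fin.snoc_castSucc, Fin.snoc_last]
  map_smul' c v := funext fun j => by
    induction j using Fin.lastCases <;> simp [Fin.snoc_castSucc, Fin.snoc_last]

/-- Restriction `Aⁿ⁺¹ → Aⁿ`. -/
def restrL (n : ℕ) : (Fin (n+1) → A) →ₗ[A] (Fin n → A) :=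
  LinearMap.funLeft A A Fin.castSucc

lemma restr_incl : (restrL n).comp (inclL n) = (LinearMap.id : (Fin n → A) →ₗ[A] _) := by
  ext v j
  simp [restrL, inclL, LinearMap.funLeft, Fin.snoc_castSucc]

/-- The last basis vector of `Aⁿ⁺¹`. -/
def eLast (n : ℕ) : Fin (n+1) → A := Pi.single (Fin.last n) 1

lemma vec_split (v : Fin (n+1) → A) :
    v = inclL n (restrL n v) + v (Fin.last n) • eLast n := by
  funext j
  induction j using Fin.lastCases with
  | last => simp [inclL, restrL, eLast, Fin.snoc_last, Pi.single_apply]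
  | cast i =>
      simp [inclL, restrL, eLast, LinearMap.funLeft, Fin.snoc_castSucc, Pi.single_apply,
        (Fin.castSucc_lt_last i).ne]

lemma kform_comp_incl (a : Fin (n+1) → A) :
    (kform a).comp (inclL n) = kform (a ∘ Fin.castSucc) := by
  apply LinearMap.ext; intro w
  rw [LinearMap.comp_apply, kform_apply, kform_apply, Fin.sum_univ_castSucc]
  simp [inclL, Fin.snoc_castSucc, Fin.snoc_last]

lemma kform_eLast (a : Fin (n+1) → A) : kform a (eLast n) = a (Fin.last n) := by
  rw [kform_apply]
  simp [eLast, Pi.single_apply, mul_ite, Finset.sum_ite_eq']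

lemma proj_comp_incl : (LinearMap.proj (Fin.last n) : (Fin (n+1) → A) →ₗ[A] A).comp (inclL n) = 0 := by
  apply LinearMap.ext; intro w
  simp [inclL, Fin.snoc_last]

/-- Splitting: if `J u + e ∧ J v = 0` then `u = v = 0`. -/
lemma split_eq_zero {u v : ExteriorAlgebra A (Fin n → A)}
    (h : emap (inclL n) u + ExteriorAlgebra.ι A (eLast n) * emap (inclL n) v = 0) : u = 0 ∧ v = 0 := by
  set ψ : Module.Dual A (Fin (n+1) → A) := LinearMap.proj (Fin.last n) with hψ
  have hJ : ∀ t : ExteriorAlgebra A (Fin n → A), contractLeft ψ (emap (inclL n) t) = 0 := by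
    intro t
    rw [contract_emap, hψ, proj_comp_incl]
    simp
  have h2 := congrArg (contractLeft ψ) h
  rw [map_add, hJ, contractLeft_ι_mul, hJ, mul_zero, sub_zero, map_zero, zero_add] at h2
  have hψe : ψ (eLast n) = 1 := by simp [hψ, eLast]
  rw [hψe, one_smul] at h2
  have hv : v = 0 := by
    have := congrArg (emap (restrL n)) h2
    rwa [emap_comp_eq_id _ _ restr_incl, map_zero] at this
  refine ⟨?_, hv⟩
  rw [hv, map_zero, mul_zero, add_zero] at h
  have := congrArg (emap (restrL n)) h
  rwa [emap_comp_eq_id _ _ restr_incl, map_zero] at this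

end Succ

variable {n : ℕ}

set_option maxHeartbeats 1000000 in
lemma decomp {p : ℕ} {z : ExteriorAlgebra A (Fin (n+1) → A)}
    (hz : z ∈ ⋀[A]^p (Fin (n+1) → A)) :
    ∃ x0 x1 : ExteriorAlgebra A (Fin n → A), x0 ∈ ⋀[A]^p (Fin n → A) ∧
      x1 ∈ ⋀[A]^(p-1) (Fin n → A) ∧ (p = 0 → x1 = 0) ∧
      z = emap (inclL n) x0 + ExteriorAlgebra.ι A (eLast n) * emap (inclL n) x1 := by
  induction hz using Submodule.pow_induction_on_left' with
  | algebraMap r =>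
      refine ⟨algebraMap A _ r, 0, ?_, zero_mem _, fun _ => rfl, ?_⟩
      · simpa using Submodule.algebraMap_mem (S := ⋀[A]^0 (Fin n → A)) r
      · simp [AlgHom.commutes]
  | add x y i hx hy ihx ihy =>
      obtain ⟨x0, x1, hx0, hx1, hx10, rfl⟩ := ihx
      obtain ⟨y0, y1, hy0, hy1, hy10, rfl⟩ := ihy
      refine ⟨x0 + y0, x1 + y1, add_mem hx0 hy0, add_mem hx1 hy1,
        fun h => by rw [hx10 h, hy10 h, add_zero], ?_⟩
      simp only [map_add, mul_add]
      abel
  | mem_mul m hm i z hz ihz =>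
      obtain ⟨v, rfl⟩ := hm
      obtain ⟨x0, x1, hx0, hx1, hx10, rfl⟩ := ihz
      set J := emap (A := A) (inclL n) with hJdef
      set E := ExteriorAlgebra.ι A (eLast n : Fin (n+1) → A) with hEdef
      set w := restrL n v with hwdef
      set c := v (Fin.last n) with hcdef
      have hv : ExteriorAlgebra.ι A v = ExteriorAlgebra.ι A (inclL n w) + c • E := by
        conv_lhs => rw [vec_split v]
        rw [map_add, map_smul]
      have hsw : ExteriorAlgebra.ι A (inclL n w) * E = -(E * ExteriorAlgebra.ι A (inclL n w)) :=
        eq_neg_of_add_eq_zero_left (ι_add_mul_swap _ _)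
      refine ⟨ExteriorAlgebra.ι A w * x0, c • x0 - ExteriorAlgebra.ι A w * x1,
        mem_pow_succ (LinearMap.mem_range_self _ _) hx0, ?_, fun h => absurd h i.succ_ne_zero, ?_⟩
      · show _ ∈ ⋀[A]^(i.succ - 1) (Fin n → A)
        have : i.succ - 1 = i := rfl
        rw [this]
        refine sub_mem (Submodule.smul_mem _ _ hx0) ?_
        rcases i with _ | k
        · rw [hx10 rfl, mul_zero]; exact zero_mem _
        · exact mem_pow_succ (LinearMap.mem_range_self _ _) hx1
      · have h1 : J (ExteriorAlgebra.ι A w * x0) = ExteriorAlgebra.ι A (inclL n w) * J x0 := by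
          rw [hJdef, map_mul, emap_ι]
        have h2 : ExteriorAlgebra.ι A (inclL n w) * (E * J x1)
            = -(E * J (ExteriorAlgebra.ι A w * x1)) := by
          rw [← mul_assoc, hsw, neg_mul, mul_assoc, hJdef, map_mul, emap_ι]
        have h4 : E * (E * J x1) = 0 := by
          rw [← mul_assoc, hEdef, ι_sq_zero, zero_mul]
        have h5 : J (c • x0 - ExteriorAlgebra.ι A w * x1)
            = c • J x0 - J (ExteriorAlgebra.ι A w * x1) := by
          rw [map_sub, map_smul]
        rw [hv, add_mul, mul_add, mul_add, smul_mul_assoc, smul_mul_assoc, h1, h2, h4, h5,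
          mul_sub, mul_smul_comm, smul_zero]
        abel

open RingTheory.Sequence in
lemma peel_last (a : Fin (n+1) → A) (h : IsWeaklyRegular A (List.ofFn a)) :
    IsWeaklyRegular A (List.ofFn (a ∘ Fin.castSucc)) ∧
      ∀ r : A, a (Fin.last n) * r ∈ Ideal.span (Set.range (a ∘ Fin.castSucc)) →
        r ∈ Ideal.span (Set.range (a ∘ Fin.castSucc)) := by
  have hlist : List.ofFn a = List.ofFn (a ∘ Fin.castSucc) ++ [a (Fin.last n)] := by
    rw [List.ofFn_succ' a, List.concat_eq_append]
    rfl
  have hlen : (List.ofFn (a ∘ Fin.castSucc)).length = n := List.length_ofFn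
  have htake : ∀ i : ℕ, i ≤ n →
      (List.ofFn a).take i = (List.ofFn (a ∘ Fin.castSucc)).take i := by
    intro i hi
    rw [hlist, List.take_append_of_le_length (by rw [hlen]; exact hi)]
  have hspan : Ideal.ofList (List.ofFn (a ∘ Fin.castSucc)) =
      Ideal.span (Set.range (a ∘ Fin.castSucc)) := by
    apply congrArg Ideal.span
    ext r
    exact List.mem_ofFn
  constructor
  · refine ⟨fun i hi => ?_⟩
    rw [hlen] at hi
    have h2 := h.regular_mod_prev i (by rw [List.length_ofFn]; omega)
    rw [htake i (le_of_lt hi)] at h2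
    have hget2 : (List.ofFn a)[i]'(by rw [List.length_ofFn]; omega) =
        (List.ofFn (a ∘ Fin.castSucc))[i]'(by rw [hlen]; exact hi) := by
      rw [List.getElem_ofFn, List.getElem_ofFn]
      rfl
    rw [hget2] at h2
    exact h2
  · intro r hr
    have h2 := h.regular_mod_prev n (by rw [List.length_ofFn]; omega)
    have htn : (List.ofFn a).take n = List.ofFn (a ∘ Fin.castSucc) := by
      rw [hlist, List.take_append_of_le_length (le_of_eq hlen.symm),
        List.take_of_length_le (le_of_eq hlen)]
    have hgn : (List.ofFn a)[n]'(by rw [List.length_ofFn]; omega) = a (Fin.last n) := by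
      rw [List.getElem_ofFn]
      rfl
    rw [htn, hgn, hspan] at h2
    -- h2 : IsSMulRegular (A ⧸ Ideal.span (range b) • ⊤) (a (last n))
    have hIT : (Ideal.span (Set.range (a ∘ Fin.castSucc)) • ⊤ : Submodule A A) =
        Ideal.span (Set.range (a ∘ Fin.castSucc)) := by
      rw [Ideal.smul_eq_mul, Ideal.mul_top]
    rw [hIT] at h2
    have hz : a (Fin.last n) • Submodule.Quotient.mk (p := (Ideal.span (Set.range (a ∘ Fin.castSucc)) : Submodule A A)) r
        = a (Fin.last n) • (0 : A ⧸ (Ideal.span (Set.range (a ∘ Fin.castSucc)) : Submodule A A)) := by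
      rw [smul_zero, ← Submodule.Quotient.mk_smul, smul_eq_mul,
        Submodule.Quotient.mk_eq_zero]
      exact hr
    have := h2 hz
    rwa [Submodule.Quotient.mk_eq_zero] at this

set_option maxHeartbeats 2000000 in
open RingTheory.Sequence in
lemma koszul_pos : ∀ (n : ℕ) (a : Fin n → A), IsWeaklyRegular A (List.ofFn a) →
    ∀ (p : ℕ), 0 < p → ∀ x ∈ ⋀[A]^p (Fin n → A), contractLeft (kform a) x = 0 →
      ∃ y ∈ ⋀[A]^(p + 1) (Fin n → A), contractLeft (kform a) y = x := by
  intro n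
  induction n with
  | zero =>
      intro a _ p hp x hx _
      have hbot : (LinearMap.range (ExteriorAlgebra.ι A : (Fin 0 → A) →ₗ[A] _)) = ⊥ := by
        rw [LinearMap.range_eq_bot]
        apply LinearMap.ext; intro v
        rw [Subsingleton.elim v 0, map_zero]; rfl
      obtain ⟨q, rfl⟩ : ∃ q, p = q + 1 := ⟨p - 1, (Nat.succ_pred_eq_of_pos hp).symm⟩
      have hx' : x ∈ (⊥ : Submodule A (ExteriorAlgebra A (Fin 0 → A))) ^ (q + 1) := by
        rw [← hbot]; exact hx
      rw [pow_succ, Submodule.mul_bot] at hx'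
      have hx0 : x = 0 := (Submodule.mem_bot _).mp hx'
      exact ⟨0, zero_mem _, by rw [map_zero, hx0]⟩
  | succ n IH =>
      intro a ha p hp x hx hdx
      obtain ⟨hw, hreg⟩ := peel_last a ha
      set b : Fin n → A := a ∘ Fin.castSucc with hbdef
      set c : A := a (Fin.last n) with hcdef
      obtain ⟨x0, x1, hx0, hx1, -, rfl⟩ := decomp hx
      set J := emap (A := A) (inclL n) with hJdef
      set E := ExteriorAlgebra.ι A (eLast n : Fin (n+1) → A) with hEdef
      have hd' : ∀ t, contractLeft (kform a) (J t) = J (contractLeft (kform b) t) := by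
        intro t
        rw [hJdef, contract_emap, kform_comp_incl]
      have e1 : contractLeft (kform a) (J x0 + E * J x1) =
          J (contractLeft (kform b) x0 + c • x1) +
            E * J (-(contractLeft (kform b) x1)) := by
        rw [map_add, hd', hEdef, contractLeft_ι_mul, hd', kform_eLast,
          map_add, map_smul, map_neg, mul_neg]
        abel
      obtain ⟨h1, h2⟩ := split_eq_zero (u := contractLeft (kform b) x0 + c • x1)
        (v := -(contractLeft (kform b) x1)) (by rw [← e1]; exact hdx)
      have hd'x1 : contractLeft (kform b) x1 = 0 := neg_eq_zero.mp h2
      obtain ⟨y1, hy1mem, hy1⟩ :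
          ∃ y1 ∈ ⋀[A]^p (Fin n → A), contractLeft (kform b) y1 = x1 := by
        rcases p with _ | q
        · omega
        rcases Nat.eq_zero_or_pos q with hq | hq
        · subst hq
          have hx1' : x1 ∈ (1 : Submodule A (ExteriorAlgebra A (Fin n → A))) := by
            have h0 : x1 ∈ ⋀[A]^0 (Fin n → A) := hx1
            rwa [show (⋀[A]^0 (Fin n → A)) = (1 : Submodule A _) from pow_zero _] at h0
          obtain ⟨r, hr⟩ := Submodule.mem_one.mp hx1'
          have hsm : c • x1 = algebraMap A (ExteriorAlgebra A (Fin n → A)) (c * r) := by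
            rw [← hr, map_mul, Algebra.smul_def]
          have hcr : c * r ∈ Ideal.span (Set.range b) := by
            refine (koszul_deg0 b (c * r)).mp ⟨-x0, neg_mem hx0, ?_⟩
            rw [map_neg, ← hsm]
            have := h1
            rw [add_eq_zero_iff_eq_neg] at this
            rw [this, neg_neg]
          obtain ⟨y1, hy1mem, hy1⟩ := (koszul_deg0 b r).mpr (hreg r hcr)
          exact ⟨y1, hy1mem, by rw [hy1, hr]⟩
        · exact IH b hw q hq x1 hx1 hd'x1
      have hx'c : contractLeft (kform b) (x0 + c • y1) = 0 := by
        rw [map_add, map_smul, hy1]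
        exact h1
      obtain ⟨y0, hy0mem, hy0⟩ := IH b hw p hp (x0 + c • y1)
        (add_mem hx0 (Submodule.smul_mem _ _ hy1mem)) hx'c
      refine ⟨J y0 - E * J y1, ?_, ?_⟩
      · refine sub_mem (emap_mem_pow _ hy0mem) ?_
        exact mem_pow_succ (LinearMap.mem_range_self _ _) (emap_mem_pow _ hy1mem)
      · rw [map_sub, hd', hEdef, contractLeft_ι_mul, hd', kform_eLast, hy0, hy1,
          map_add, map_smul]
        rw [← hcdef]
        abel

end KoszulAux

/-- Let `A` be a commutative ring and `a₁, …, aₙ ∈ A` a regular sequence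
generating a proper ideal.  The Koszul complex `K(a₁,…,aₙ)` is the exterior algebra on `Aⁿ`
with the differential `d` given by contraction with the dual vector `φ = ∑ aᵢ·eᵢ*`
(so `d(eᵢ) = aᵢ`).  Then the complex is acyclic in positive homological degrees: every
`d`-cycle lying in `⋀^p Aⁿ` with `p > 0` is a boundary of an element of `⋀^(p+1) Aⁿ`;
moreover in degree `0` the homology is `A/(a₁,…,aₙ)`: an element of `A = ⋀^0` is a boundary
iff it lies in the ideal `(a₁,…,aₙ)`. -/
theorem unfolding_stmt5 (A : Type*) [CommRing A] (n : ℕ) (a : Fin n → A)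
    (hreg : RingTheory.Sequence.IsRegular A (List.ofFn a)) :
    let φ : Module.Dual A (Fin n → A) := ∑ i : Fin n, a i • LinearMap.proj i
    let d : ExteriorAlgebra A (Fin n → A) →ₗ[A] ExteriorAlgebra A (Fin n → A) :=
      CliffordAlgebra.contractLeft φ
    (∀ p : ℕ, 0 < p → ∀ x ∈ ⋀[A]^p (Fin n → A), d x = 0 →
        ∃ y ∈ ⋀[A]^(p + 1) (Fin n → A), d y = x) ∧
    (∀ x : A,
      (∃ y ∈ ⋀[A]^1 (Fin n → A), d y = algebraMap A (ExteriorAlgebra A (Fin n → A)) x) ↔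
        x ∈ Ideal.span (Set.range a)) := by
  intro φ d
  exact ⟨fun p hp x hx hdx => koszul_pos n a hreg.toIsWeaklyRegular p hp x hx hdx,
    fun x => koszul_deg0 a x⟩
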